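/- Let d, n ≥ 1, let T > 0, let z₀ ∈ ℝ^d, and let x : ℝ^d × ℝ → ℝ^n be twice continuously differentiable (C²) on an open set containing {z₀} × [0, T]. Assume that the curve t ↦ x(z₀, t) is injective on [0, T] and that the velocity ∂ₜx(z₀, t) ≠ 0 for every t ∈ [0, T]. Then there exists a neighborhood V of z₀ in ℝ^d such that for every z ∈ V the curve t ↦ x(z, t) is injective on [0, T]. -/

import Mathlib

open Set Filter Metric Topology


/-- Stability of non-self-intersection: if `x : ℝ^d × ℝ → ℝ^n` is `C²` on an open set
containing `{z₀} × [0,T]`, the curve `t ↦ x(z₀,t)` is injective on `[0,T]` and its velocity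
`∂ₜx(z₀,t)` never vanishes on `[0,T]`, then for all `z` in some neighborhood of `z₀` the
curve `t ↦ x(z,t)` is injective on `[0,T]`. -/
theorem stmt3 (d n : ℕ) (hd : 1 ≤ d) (hn : 1 ≤ n) (T : ℝ) (hT : 0 < T)
    (z₀ : Fin d → ℝ) (x : (Fin d → ℝ) × ℝ → Fin n → ℝ)
    (U : Set ((Fin d → ℝ) × ℝ)) (hU : IsOpen U)
    (hsub : ({z₀} : Set (Fin d → ℝ)) ×ˢ Set.Icc (0 : ℝ) T ⊆ U)
    (hx : ContDiffOn ℝ 2 x U)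
    (hinj : Set.InjOn (fun t => x (z₀, t)) (Set.Icc 0 T))
    (hvel : ∀ t ∈ Set.Icc (0 : ℝ) T, deriv (fun s => x (z₀, s)) t ≠ 0) :
    ∃ V : Set (Fin d → ℝ), IsOpen V ∧ z₀ ∈ V ∧
      ∀ z ∈ V, Set.InjOn (fun t => x (z, t)) (Set.Icc 0 T) := by
  by_contra hcon
  push_neg at hcon
  -- basic facts about x on U
  have hmemU : ∀ t ∈ Set.Icc (0:ℝ) T, (z₀, t) ∈ U := fun t ht =>
    hsub ⟨rfl, ht⟩
  have hdiff : ∀ p ∈ U, HasFDerivAt x (fderiv ℝ x p) p := fun p hp =>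
    ((hx.contDiffAt (hU.mem_nhds hp)).differentiableAt two_ne_zero).hasFDerivAt
  set v : (Fin d → ℝ) × ℝ → Fin n → ℝ := fun p => fderiv ℝ x p (0, 1) with hv
  have hvcont : ContinuousOn v U :=
    (hx.continuousOn_fderiv_of_isOpen hU one_le_two).clm_apply continuousOn_const
  have hder : ∀ z : Fin d → ℝ, ∀ τ : ℝ, (z, τ) ∈ U →
      HasDerivAt (fun s => x (z, s)) (v (z, τ)) τ := by
    intro z τ hp
    have hline : HasDerivAt (fun s : ℝ => ((z, s) : (Fin d → ℝ) × ℝ)) ((0 : Fin d → ℝ), (1:ℝ)) τ :=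
      (hasDerivAt_const τ z).prodMk (hasDerivAt_id τ)
    exact (hdiff _ hp).comp_hasDerivAt τ hline
  -- extract sequence of counterexamples
  have H : ∀ k : ℕ, ∃ z : Fin d → ℝ, dist z z₀ < 1/(k+1) ∧ ∃ a ∈ Set.Icc (0:ℝ) T,
      ∃ b ∈ Set.Icc (0:ℝ) T, x (z, a) = x (z, b) ∧ a ≠ b := by
    intro k
    obtain ⟨z, hz, hninj⟩ := hcon (Metric.ball z₀ (1/(k+1))) Metric.isOpen_ball
      (Metric.mem_ball_self (by positivity))
    rw [Set.InjOn] at hninj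
    push_neg at hninj
    obtain ⟨a, ha, b, hb, hab, hne⟩ := hninj
    exact ⟨z, Metric.mem_ball.mp hz, a, ha, b, hb, hab, hne⟩
  choose z hzd a ha b hb hxab hne using H
  have hzten : Tendsto z atTop (𝓝 z₀) := by
    rw [tendsto_iff_dist_tendsto_zero]
    refine squeeze_zero (fun k => dist_nonneg) (fun k => (hzd k).le) ?_
    exact tendsto_one_div_add_atTop_nhds_zero_nat
  -- compactness: convergent subsequence of (a k, b k)
  obtain ⟨⟨s₀, t₀⟩, hst, φ, hφ, hten⟩ :=
    (isCompact_Icc.prod isCompact_Icc).tendsto_subseq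
      (x := fun k => ((a k, b k) : ℝ × ℝ)) (fun k => ⟨ha k, hb k⟩)
  obtain ⟨hs₀, ht₀⟩ := hst
  have haten : Tendsto (fun k => a (φ k)) atTop (𝓝 s₀) :=
    (continuous_fst.tendsto _).comp hten
  have hbten : Tendsto (fun k => b (φ k)) atTop (𝓝 t₀) :=
    (continuous_snd.tendsto _).comp hten
  have hzφ : Tendsto (fun k => z (φ k)) atTop (𝓝 z₀) := hzten.comp hφ.tendsto_atTop
  -- continuity forces s₀ = t₀
  have hxc : ContinuousOn x U := hx.continuousOn
  have hxs : Tendsto (fun k => x (z (φ k), a (φ k))) atTop (𝓝 (x (z₀, s₀))) := by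
    have : ContinuousAt x (z₀, s₀) := hxc.continuousAt (hU.mem_nhds (hmemU _ hs₀))
    exact this.tendsto.comp (hzφ.prodMk_nhds haten)
  have hxt : Tendsto (fun k => x (z (φ k), b (φ k))) atTop (𝓝 (x (z₀, t₀))) := by
    have : ContinuousAt x (z₀, t₀) := hxc.continuousAt (hU.mem_nhds (hmemU _ ht₀))
    exact this.tendsto.comp (hzφ.prodMk_nhds hbten)
  have hst_eq : s₀ = t₀ := by
    refine hinj hs₀ ht₀ ?_
    have := tendsto_nhds_unique (hxs.congr (fun k => (hxab (φ k)))) hxt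
    simpa using this
  subst hst_eq
  -- the nonvanishing velocity
  have hvel' : v (z₀, s₀) ≠ 0 := by
    have := hvel s₀ hs₀
    rwa [(hder z₀ s₀ (hmemU _ hs₀)).deriv] at this
  set v₀ := v (z₀, s₀) with hv₀
  have hC : 0 < ‖v₀‖ := norm_pos_iff.mpr hvel'
  -- neighborhood where v is close to v₀ and contained in U
  have hcontv : ContinuousAt v (z₀, s₀) := hvcont.continuousAt (hU.mem_nhds (hmemU _ hs₀))
  obtain ⟨r₁, hr₁, hr₁'⟩ := Metric.continuousAt_iff.mp hcontv (‖v₀‖/2) (by positivity)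
  obtain ⟨r₂, hr₂, hr₂'⟩ := Metric.isOpen_iff.mp hU (z₀, s₀) (hmemU _ hs₀)
  set r := min r₁ r₂ with hrdef
  have hr : 0 < r := lt_min hr₁ hr₂
  have hball : ∀ z' : Fin d → ℝ, ∀ τ : ℝ, dist z' z₀ < r → dist τ s₀ < r →
      (z', τ) ∈ U ∧ ‖v (z', τ) - v₀‖ < ‖v₀‖/2 := by
    intro z' τ h1 h2
    have hdp : dist ((z', τ) : (Fin d → ℝ) × ℝ) (z₀, s₀) < r := by
      rw [Prod.dist_eq]
      exact max_lt h1 h2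
    constructor
    · exact hr₂' (Metric.mem_ball.mpr (lt_of_lt_of_le hdp (min_le_right _ _)))
    · have := hr₁' (lt_of_lt_of_le hdp (min_le_left _ _))
      rwa [dist_eq_norm] at this
  -- pick a suitable index
  have hev : ∀ᶠ k in atTop, dist (z (φ k)) z₀ < r ∧ a (φ k) ∈ Metric.ball s₀ r ∧
      b (φ k) ∈ Metric.ball s₀ r := by
    have h1 := (tendsto_iff_dist_tendsto_zero.mp hzφ).eventually_lt_const hr
    have h2 := haten.eventually (Metric.ball_mem_nhds s₀ hr)
    have h3 := hbten.eventually (Metric.ball_mem_nhds s₀ hr)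
    filter_upwards [h1, h2, h3] with k hk1 hk2 hk3 using ⟨hk1, hk2, hk3⟩
  obtain ⟨k, hk1, hk2, hk3⟩ := hev.exists
  set z' := z (φ k)
  set a' := a (φ k)
  set b' := b (φ k)
  -- mean value estimate on the ball
  set g : ℝ → Fin n → ℝ := fun τ => x (z', τ) - τ • v₀ with hg
  have hgd : ∀ τ ∈ Metric.ball s₀ r, HasDerivWithinAt g (v (z', τ) - v₀) (Metric.ball s₀ r) τ := by
    intro τ hτ
    have hmem := (hball z' τ hk1 (Metric.mem_ball.mp hτ)).1
    have h1 : HasDerivAt (fun s => x (z', s)) (v (z', τ)) τ := hder z' τ hmem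
    have h2 : HasDerivAt (fun s : ℝ => s • v₀) v₀ τ := by
      simpa using (hasDerivAt_id τ).smul_const v₀
    exact (h1.sub h2).hasDerivWithinAt
  have hgb : ∀ τ ∈ Metric.ball s₀ r, ‖v (z', τ) - v₀‖ ≤ ‖v₀‖/2 := fun τ hτ =>
    (hball z' τ hk1 (Metric.mem_ball.mp hτ)).2.le
  have hmv := (convex_ball s₀ r).norm_image_sub_le_of_norm_hasDerivWithin_le hgd hgb hk3 hk2
  -- compute g a' - g b'
  have hgeq : g a' - g b' = -((a' - b') • v₀) := by
    simp only [hg]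
    rw [hxab (φ k)]
    module
  rw [hgeq] at hmv
  rw [norm_neg, sub_smul] at hmv
  have : |a' - b'| * ‖v₀‖ ≤ ‖v₀‖/2 * |a' - b'| := by
    calc |a' - b'| * ‖v₀‖ = ‖(a' - b') • v₀‖ := by rw [norm_smul, Real.norm_eq_abs]
    _ = ‖a' • v₀ - b' • v₀‖ := by rw [sub_smul]
    _ ≤ ‖v₀‖/2 * ‖a' - b'‖ := hmv
    _ = ‖v₀‖/2 * |a' - b'| := by rw [Real.norm_eq_abs]
  have habs : 0 < |a' - b'| := abs_pos.mpr (sub_ne_zero.mpr (hne (φ k)))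
  nlinarith
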